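/- Let E be a real normed vector space and S ⊆ E. Let λ > 0 and μ > 0. Let M, Ṁ : E → (n×n real symmetric matrices), A : E → ℝ^{n×n}, B : E → ℝ^{n×m}, K : E → ℝ^{m×n} be functions which on S are Lipschitz with constants L_M, L_{Ṁ}, L_A, L_B, L_K and bounded in spectral norm by S_M, S_A (with S_A bounding ‖A‖), S_B, S_K respectively, and let B_w ∈ ℝ^{n×l} be a fixed matrix with ‖B_w‖ ≤ S_{B_w}. Define F(s) := M(s)(A(s)+B(s)K(s)) + (M(s)(A(s)+B(s)K(s)))ᵀ + Ṁ(s) + λ·M(s) + μ⁻¹·M(s)B_w B_wᵀ M(s). Then the function s ↦ λ_max(F(s)) is Lipschitz on S with constant L_{Ṁ} + 2·(S_M L_A + S_A L_M + S_M S_B L_K + S_B S_K L_M + S_M S_K L_B + (λ/2)·L_M + μ⁻¹·S_M L_M S_{B_w}²). -/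

import Mathlib

open Matrix Set
open scoped Matrix.Norms.L2Operator

noncomputable def euclNorm {ι : Type*} [Fintype ι] (v : ι → ℝ) : ℝ := Real.sqrt (v ⬝ᵥ v)

/-- Spectral (ℓ²-operator) norm of a real matrix. -/
noncomputable def specNorm {ι κ : Type*} [Fintype ι] [Fintype κ] [DecidableEq κ]
    (A : Matrix ι κ ℝ) : ℝ :=
  ‖LinearMap.toContinuousLinearMap (Matrix.toEuclideanLin A)‖

/-- Largest eigenvalue of a real symmetric matrix, as the supremum of the
Rayleigh quotient over the unit sphere. -/
noncomputable def lambdaMax {ι : Type*} [Fintype ι] (A : Matrix ι ι ℝ) : ℝ :=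
  sSup {r : ℝ | ∃ v : ι → ℝ, euclNorm v = 1 ∧ r = v ⬝ᵥ (A *ᵥ v)}

lemma specNorm_eq {ι κ : Type*} [Fintype ι] [Fintype κ] [DecidableEq κ]
    (A : Matrix ι κ ℝ) : specNorm A = ‖A‖ := rfl

lemma euclNorm_eq {ι : Type*} [Fintype ι] (v : ι → ℝ) :
    euclNorm v = ‖(EuclideanSpace.equiv ι ℝ).symm v‖ := by
  rw [EuclideanSpace.norm_eq]
  unfold euclNorm
  congr 1
  simp [dotProduct, Real.norm_eq_abs, sq_abs, pow_two, abs_mul_abs_self]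

lemma rayleigh_abs_le {ι : Type*} [Fintype ι] [DecidableEq ι] (X : Matrix ι ι ℝ)
    {v : ι → ℝ} (hv : euclNorm v = 1) : |v ⬝ᵥ (X *ᵥ v)| ≤ specNorm X := by
  set x : EuclideanSpace ℝ ι := (EuclideanSpace.equiv ι ℝ).symm v with hxdef
  set y : EuclideanSpace ℝ ι := (EuclideanSpace.equiv ι ℝ).symm (X *ᵥ v) with hydef
  have hx : ‖x‖ = 1 := by rw [← euclNorm_eq]; exact hv
  have hinner : v ⬝ᵥ (X *ᵥ v) = (inner ℝ x y : ℝ) := by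
    simp [PiLp.inner_apply, RCLike.inner_apply, dotProduct, hxdef, hydef, mul_comm]
  have h1 : |(inner ℝ x y : ℝ)| ≤ ‖x‖ * ‖y‖ := abs_real_inner_le_norm x y
  have h2 : ‖y‖ ≤ ‖X‖ * ‖x‖ := X.l2_opNorm_mulVec x
  rw [hinner, specNorm_eq]
  calc |(inner ℝ x y : ℝ)| ≤ ‖x‖ * ‖y‖ := h1
    _ ≤ 1 * (‖X‖ * 1) := by rw [hx]; simpa [hx] using h2
    _ = ‖X‖ := by ring

lemma lambdaMax_bddAbove {ι : Type*} [Fintype ι] [DecidableEq ι] (X : Matrix ι ι ℝ) :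
    BddAbove {r : ℝ | ∃ v : ι → ℝ, euclNorm v = 1 ∧ r = v ⬝ᵥ (X *ᵥ v)} := by
  refine ⟨specNorm X, ?_⟩
  rintro r ⟨v, hv, rfl⟩
  exact (abs_le.mp (rayleigh_abs_le X hv)).2

lemma abs_lambdaMax_sub_le {n : ℕ} (X Y : Matrix (Fin n) (Fin n) ℝ) :
    |lambdaMax X - lambdaMax Y| ≤ specNorm (X - Y) := by
  rcases Nat.eq_zero_or_pos n with h0 | hpos
  · subst h0
    have hz : ∀ Z : Matrix (Fin 0) (Fin 0) ℝ, lambdaMax Z = 0 := by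
      intro Z
      unfold lambdaMax
      convert Real.sSup_empty using 2
      ext r
      simp [euclNorm, dotProduct]
    rw [hz, hz, specNorm_eq]
    simpa using norm_nonneg (X - Y)
  · have hunit : euclNorm (Pi.single (⟨0, hpos⟩ : Fin n) (1 : ℝ)) = 1 := by
      simp [euclNorm, dotProduct_single]
    have key : ∀ X Y : Matrix (Fin n) (Fin n) ℝ,
        lambdaMax X ≤ lambdaMax Y + specNorm (X - Y) := by
      intro X Y
      refine csSup_le ⟨_, ⟨_, hunit, rfl⟩⟩ ?_
      rintro r ⟨v, hv, rfl⟩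
      have h1 : v ⬝ᵥ (Y *ᵥ v) ≤ lambdaMax Y :=
        le_csSup (lambdaMax_bddAbove Y) ⟨v, hv, rfl⟩
      have h2 : v ⬝ᵥ (X *ᵥ v) - v ⬝ᵥ (Y *ᵥ v) = v ⬝ᵥ ((X - Y) *ᵥ v) := by
        simp [Matrix.sub_mulVec, dotProduct_sub]
      have h3 := (abs_le.mp (rayleigh_abs_le (X - Y) hv)).2
      linarith
    have k1 := key X Y
    have k2 := key Y X
    have hrev : specNorm (Y - X) = specNorm (X - Y) := by
      rw [specNorm_eq, specNorm_eq, norm_sub_rev]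
    rw [abs_sub_le_iff]
    constructor <;> linarith [hrev ▸ k2]

lemma specMul {ι κ τ : Type*} [Fintype ι] [Fintype κ] [Fintype τ]
    [DecidableEq κ] [DecidableEq τ]
    (X : Matrix ι κ ℝ) (Y : Matrix κ τ ℝ) {a b : ℝ} (hX : ‖X‖ ≤ a) (hY : ‖Y‖ ≤ b) :
    ‖X * Y‖ ≤ a * b :=
  (Matrix.l2_opNorm_mul X Y).trans
    (mul_le_mul hX hY (norm_nonneg _) ((norm_nonneg _).trans hX))

lemma spec_transpose {ι κ : Type*} [Fintype ι] [Fintype κ] [DecidableEq ι] [DecidableEq κ]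
    (X : Matrix ι κ ℝ) : ‖Xᵀ‖ = ‖X‖ := by
  rw [← Matrix.conjTranspose_eq_transpose_of_trivial, Matrix.l2_opNorm_conjTranspose]

lemma norm_add5_le {G : Type*} [SeminormedAddCommGroup G] (a b c d e : G) :
    ‖a + b + c + d + e‖ ≤ ‖a‖ + ‖b‖ + ‖c‖ + ‖d‖ + ‖e‖ := by
  calc ‖a + b + c + d + e‖ ≤ ‖a + b + c + d‖ + ‖e‖ := norm_add_le _ _
    _ ≤ ‖a + b + c‖ + ‖d‖ + ‖e‖ := by
        have := norm_add_le (a + b + c) d; linarith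
    _ ≤ ‖a + b‖ + ‖c‖ + ‖d‖ + ‖e‖ := by
        have := norm_add_le (a + b) c; linarith
    _ ≤ ‖a‖ + ‖b‖ + ‖c‖ + ‖d‖ + ‖e‖ := by
        have := norm_add_le a b; linarith


/-- Proposition 1 of the paper (first inequality), for the Schur complement
`F(s) = M(A+BK) + (M(A+BK))ᵀ + Ṁ + λM + μ⁻¹ M B_w B_wᵀ M` of the block matrix
on the left-hand side of Eq. (10): its largest eigenvalue is Lipschitz with constant
`L_Ṁ + 2(S_M L_A + S_A L_M + S_M S_B L_K + S_B S_K L_M + S_M S_K L_B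
 + (λ/2) L_M + μ⁻¹ S_M L_M S_{B_w}²)`. -/
theorem prop1_first_inequality_lipschitz
    (n m l : ℕ) (E : Type*) [NormedAddCommGroup E] [NormedSpace ℝ E] (S : Set E)
    (lam mu : ℝ) (hlam : 0 < lam) (hmu : 0 < mu)
    (M Mdot : E → Matrix (Fin n) (Fin n) ℝ)
    (hMsymm : ∀ s, (M s).IsSymm) (hMdotsymm : ∀ s, (Mdot s).IsSymm)
    (A : E → Matrix (Fin n) (Fin n) ℝ)
    (B : E → Matrix (Fin n) (Fin m) ℝ) (K : E → Matrix (Fin m) (Fin n) ℝ)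
    (Bw : Matrix (Fin n) (Fin l) ℝ)
    (SM SA SB SK SBw LM LMdot LA LB LK : ℝ)
    (hMb : ∀ s ∈ S, specNorm (M s) ≤ SM) (hAb : ∀ s ∈ S, specNorm (A s) ≤ SA)
    (hBb : ∀ s ∈ S, specNorm (B s) ≤ SB) (hKb : ∀ s ∈ S, specNorm (K s) ≤ SK)
    (hBw : specNorm Bw ≤ SBw)
    (hMl : ∀ s ∈ S, ∀ t ∈ S, specNorm (M s - M t) ≤ LM * ‖s - t‖)
    (hMdotl : ∀ s ∈ S, ∀ t ∈ S, specNorm (Mdot s - Mdot t) ≤ LMdot * ‖s - t‖)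
    (hAl : ∀ s ∈ S, ∀ t ∈ S, specNorm (A s - A t) ≤ LA * ‖s - t‖)
    (hBl : ∀ s ∈ S, ∀ t ∈ S, specNorm (B s - B t) ≤ LB * ‖s - t‖)
    (hKl : ∀ s ∈ S, ∀ t ∈ S, specNorm (K s - K t) ≤ LK * ‖s - t‖)
    (F : E → Matrix (Fin n) (Fin n) ℝ)
    (hF : ∀ s, F s = M s * (A s + B s * K s) + (M s * (A s + B s * K s))ᵀ
        + Mdot s + lam • M s + mu⁻¹ • (M s * Bw * Bwᵀ * M s)) :
    ∀ s ∈ S, ∀ t ∈ S,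
      |lambdaMax (F s) - lambdaMax (F t)| ≤
        (LMdot + 2 * (SM * LA + SA * LM + SM * SB * LK + SB * SK * LM + SM * SK * LB
          + (lam / 2) * LM + mu⁻¹ * SM * LM * SBw ^ 2)) * ‖s - t‖ := by
  intro s hs t ht
  by_cases hst : s = t
  · subst hst; simp
  have hd : 0 < ‖s - t‖ := by
    rw [norm_pos_iff]; exact sub_ne_zero.mpr hst
  set d := ‖s - t‖ with hdd
  -- rewrite specNorm hypotheses as norms
  simp only [specNorm_eq] at hMb hAb hBb hKb hBw hMl hMdotl hAl hBl hKl
  -- nonnegativity of constants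
  have hSM : 0 ≤ SM := (norm_nonneg _).trans (hMb s hs)
  have hSA : 0 ≤ SA := (norm_nonneg _).trans (hAb s hs)
  have hSB : 0 ≤ SB := (norm_nonneg _).trans (hBb s hs)
  have hSK : 0 ≤ SK := (norm_nonneg _).trans (hKb s hs)
  have hSBw : 0 ≤ SBw := (norm_nonneg _).trans hBw
  have hnn : ∀ c : ℝ, c * d ≥ 0 → 0 ≤ c := fun c h => nonneg_of_mul_nonneg_right (by linarith [h] : 0 ≤ d * c) hd
  have hLM : 0 ≤ LM := hnn _ ((norm_nonneg _).trans (hMl s hs t ht))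
  have hLMdot : 0 ≤ LMdot := hnn _ ((norm_nonneg _).trans (hMdotl s hs t ht))
  have hLA : 0 ≤ LA := hnn _ ((norm_nonneg _).trans (hAl s hs t ht))
  have hLB : 0 ≤ LB := hnn _ ((norm_nonneg _).trans (hBl s hs t ht))
  have hLK : 0 ≤ LK := hnn _ ((norm_nonneg _).trans (hKl s hs t ht))
  -- decomposition of F s - F t
  set P : E → Matrix (Fin n) (Fin n) ℝ := fun x => M x * (A x + B x * K x) with hP
  set Q : E → Matrix (Fin n) (Fin n) ℝ := fun x => M x * Bw * Bwᵀ * M x with hQ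
  have hdecomp : F s - F t = (P s - P t) + (P s - P t)ᵀ + (Mdot s - Mdot t)
      + lam • (M s - M t) + mu⁻¹ • (Q s - Q t) := by
    rw [hF s, hF t, Matrix.transpose_sub, smul_sub, smul_sub]
    simp only [hP, hQ]
    abel
  have hPdec : P s - P t = M s * (A s - A t) + (M s - M t) * A t
      + M s * B s * (K s - K t) + M s * (B s - B t) * K t + (M s - M t) * (B t * K t) := by
    simp only [hP]
    simp only [Matrix.mul_sub, Matrix.sub_mul, Matrix.mul_add, Matrix.add_mul, Matrix.mul_assoc]
    abel
  have hQdec : Q s - Q t = M s * Bw * Bwᵀ * (M s - M t) + (M s - M t) * (Bw * (Bwᵀ * M t)) := by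
    simp only [hQ]
    simp only [Matrix.mul_sub, Matrix.sub_mul, Matrix.mul_add, Matrix.add_mul, Matrix.mul_assoc]
    abel
  -- bound on ‖P s - P t‖
  have hBwT : ‖Bwᵀ‖ ≤ SBw := by rw [spec_transpose]; exact hBw
  have hPb : ‖P s - P t‖ ≤ SM * (LA * d) + LM * d * SA + SM * SB * (LK * d)
      + SM * (LB * d) * SK + LM * d * (SB * SK) := by
    rw [hPdec]
    refine (norm_add5_le _ _ _ _ _).trans ?_
    gcongr ?_ + ?_ + ?_ + ?_ + ?_
    · exact specMul _ _ (hMb s hs) (hAl s hs t ht)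
    · exact specMul _ _ (hMl s hs t ht) (hAb t ht)
    · exact specMul _ _ (specMul _ _ (hMb s hs) (hBb s hs)) (hKl s hs t ht)
    · exact specMul _ _ (specMul _ _ (hMb s hs) (hBl s hs t ht)) (hKb t ht)
    · exact specMul _ _ (hMl s hs t ht) (specMul _ _ (hBb t ht) (hKb t ht))
  have hQb : ‖Q s - Q t‖ ≤ SM * SBw * SBw * (LM * d) + LM * d * (SBw * (SBw * SM)) := by
    rw [hQdec]
    refine (norm_add_le _ _).trans ?_
    gcongr ?_ + ?_
    · exact specMul _ _ (specMul _ _ (specMul _ _ (hMb s hs) hBw) hBwT) (hMl s hs t ht)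
    · exact specMul _ _ (hMl s hs t ht) (specMul _ _ hBw (specMul _ _ hBwT (hMb t ht)))
  have hPTb : ‖(P s - P t)ᵀ‖ = ‖P s - P t‖ := spec_transpose _
  have hFb : ‖F s - F t‖ ≤
      (LMdot + 2 * (SM * LA + SA * LM + SM * SB * LK + SB * SK * LM + SM * SK * LB
        + (lam / 2) * LM + mu⁻¹ * SM * LM * SBw ^ 2)) * d := by
    rw [hdecomp]
    refine (norm_add5_le _ _ _ _ _).trans ?_
    have h4 : ‖lam • (M s - M t)‖ ≤ lam * (LM * d) := by
      rw [norm_smul, Real.norm_eq_abs, abs_of_pos hlam]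
      exact mul_le_mul_of_nonneg_left (hMl s hs t ht) hlam.le
    have h5 : ‖mu⁻¹ • (Q s - Q t)‖ ≤
        mu⁻¹ * (SM * SBw * SBw * (LM * d) + LM * d * (SBw * (SBw * SM))) := by
      rw [norm_smul, Real.norm_eq_abs, abs_of_pos (inv_pos.mpr hmu)]
      exact mul_le_mul_of_nonneg_left hQb (inv_pos.mpr hmu).le
    have h2 : ‖(P s - P t)ᵀ‖ ≤ SM * (LA * d) + LM * d * SA + SM * SB * (LK * d)
        + SM * (LB * d) * SK + LM * d * (SB * SK) := hPTb ▸ hPb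
    have h3 := hMdotl s hs t ht
    calc ‖P s - P t‖ + ‖(P s - P t)ᵀ‖ + ‖Mdot s - Mdot t‖ + ‖lam • (M s - M t)‖
          + ‖mu⁻¹ • (Q s - Q t)‖
        ≤ (SM * (LA * d) + LM * d * SA + SM * SB * (LK * d)
            + SM * (LB * d) * SK + LM * d * (SB * SK))
          + (SM * (LA * d) + LM * d * SA + SM * SB * (LK * d)
            + SM * (LB * d) * SK + LM * d * (SB * SK))
          + LMdot * d + lam * (LM * d)
          + mu⁻¹ * (SM * SBw * SBw * (LM * d) + LM * d * (SBw * (SBw * SM))) := by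
          gcongr <;> first | exact hPb | exact h2 | exact h3 | exact h4 | exact h5
      _ = (LMdot + 2 * (SM * LA + SA * LM + SM * SB * LK + SB * SK * LM + SM * SK * LB
          + (lam / 2) * LM + mu⁻¹ * SM * LM * SBw ^ 2)) * d := by ring
  calc |lambdaMax (F s) - lambdaMax (F t)| ≤ specNorm (F s - F t) :=
        abs_lambdaMax_sub_le _ _
    _ = ‖F s - F t‖ := specNorm_eq _
    _ ≤ _ := hFb
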